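/- Let Ξ be a compact metric space, g: Ξ → Ξ a minimal isometry with unique invariant Borel probability measure μ. Then for every ξ ∈ Ξ: limsup_{ε→0} log μ(B_ε(ξ)) / log ε equals the upper box dimension of Ξ, and the analogous statement holds for the liminf and the lower box dimension. In particular μ(B_ε(ξ)) does not depend on ξ. -/

import Mathlib

open MeasureTheory Metric Filter
open scoped ENNReal

/-- `M_ε(Ξ)`: maximal cardinality of an `ε`-separated subset of `Ξ`. -/
noncomputable def sepCard (Ξ : Type*) [MetricSpace Ξ] (ε : ℝ) : ℕ :=
  sSup {n : ℕ | ∃ S : Finset Ξ, S.card = n ∧ ∀ x ∈ S, ∀ y ∈ S, x ≠ y → ε ≤ dist x y}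

/-- upper/lower box dimension quantity `log M_ε / (−log ε)` as `ε → 0⁺`; the upper box
dimension is its `limsup`, the lower one its `liminf`. -/
noncomputable def boxQuot (Ξ : Type*) [MetricSpace Ξ] (ε : ℝ) : ℝ :=
  Real.log (sepCard Ξ ε) / (-Real.log ε)

section Aux

variable {Ξ : Type*} [MetricSpace Ξ] [CompactSpace Ξ] [Nonempty Ξ] [MeasurableSpace Ξ]
  [BorelSpace Ξ]

set_option linter.unusedSectionVars false

private theorem ball_indep (g : Ξ → Ξ) (hiso : Isometry g)
    (hmin : ∀ ξ : Ξ, Dense (Set.range fun n : ℕ => g^[n] ξ))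
    (μ : Measure Ξ) [IsProbabilityMeasure μ] (hinv : MeasurePreserving g μ μ) :
    ∀ ξ ξ' : Ξ, ∀ ε : ℝ, μ (Metric.ball ξ ε) = μ (Metric.ball ξ' ε) := by
  have step1 : ∀ (ξ : Ξ) (ε : ℝ), μ (ball (g ξ) ε) = μ (ball ξ ε) := by
    intro ξ ε
    have hpre : g ⁻¹' ball (g ξ) ε = ball ξ ε := by
      ext z
      simp [mem_ball, hiso.dist_eq]
    rw [← hpre, hinv.measure_preimage measurableSet_ball.nullMeasurableSet]
  have step2 : ∀ (ξ : Ξ) (n : ℕ) (ε : ℝ), μ (ball (g^[n] ξ) ε) = μ (ball ξ ε) := by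
    intro ξ n ε
    induction n with
    | zero => simp
    | succ n ih => rw [Function.iterate_succ_apply', step1, ih]
  have key : ∀ ξ ξ' : Ξ, ∀ ε : ℝ, μ (ball ξ' ε) ≤ μ (ball ξ ε) := by
    intro ξ ξ' ε
    rcases le_or_gt ε 0 with hε | hε
    · simp [ball_eq_empty.2 hε]
    · have hcover : ball ξ' ε = ⋃ n : ℕ, ball ξ' (ε - ε / (n + 1)) := by
        ext z
        simp only [Set.mem_iUnion, mem_ball]
        constructor
        · intro hz
          obtain ⟨n, hn⟩ := exists_nat_gt (ε / (ε - dist z ξ'))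
          refine ⟨n, ?_⟩
          have hd : 0 < ε - dist z ξ' := by linarith
          have hn1 : ε / (ε - dist z ξ') < (n : ℝ) + 1 := by
            have : (n : ℝ) ≤ n + 1 := by linarith
            linarith
          have hpos : (0:ℝ) < (n : ℝ) + 1 := by positivity
          have : ε / ((n:ℝ) + 1) < ε - dist z ξ' := by
            rw [div_lt_iff₀ hpos]
            have := (div_lt_iff₀ hd).mp hn1
            linarith [mul_comm (ε - dist z ξ') ((n:ℝ)+1)]
          linarith
        · rintro ⟨n, hn⟩
          have : (0:ℝ) < ε / (n + 1) := by positivity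
          linarith
      have hmono : Monotone fun n : ℕ => ball ξ' (ε - ε / (n + 1)) := by
        intro m n hmn
        apply ball_subset_ball
        have h1 : (0:ℝ) < (m:ℝ) + 1 := by positivity
        have h2 : (m:ℝ) + 1 ≤ (n:ℝ) + 1 := by exact_mod_cast by omega
        have := div_le_div_of_nonneg_left hε.le h1 h2
        linarith
      rw [hcover, hmono.directed_le.measure_iUnion]
      refine iSup_le fun n => ?_
      have hδ : 0 < ε / (n + 1) := by positivity
      obtain ⟨y, hy1, m, rfl⟩ := Metric.dense_iff.mp (hmin ξ) ξ' (ε / (n+1)) hδ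
      have hsub : ball ξ' (ε - ε / (n + 1)) ⊆ ball (g^[m] ξ) ε := by
        intro z hz
        rw [mem_ball] at *
        have h1 : dist (g^[m] ξ) ξ' < ε / (n+1) := hy1
        calc dist z (g^[m] ξ) ≤ dist z ξ' + dist ξ' (g^[m] ξ) := dist_triangle _ _ _
          _ < (ε - ε / (n+1)) + ε / (n+1) := by rw [dist_comm ξ']; linarith
          _ = ε := by ring
      calc μ (ball ξ' (ε - ε / (n + 1))) ≤ μ (ball (g^[m] ξ) ε) := measure_mono hsub
        _ = μ (ball ξ ε) := step2 ξ m ε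
  intro ξ ξ' ε
  exact le_antisymm (key ξ' ξ ε) (key ξ ξ' ε)

private theorem ball_pos (μ : Measure Ξ) [IsProbabilityMeasure μ]
    (hind : ∀ ξ ξ' : Ξ, ∀ ε : ℝ, μ (ball ξ ε) = μ (ball ξ' ε))
    (ξ : Ξ) {ε : ℝ} (hε : 0 < ε) : 0 < μ (ball ξ ε) := by
  by_contra h
  push_neg at h
  have h0 : μ (ball ξ ε) = 0 := le_antisymm h zero_le
  obtain ⟨t, ht⟩ := isCompact_univ.elim_finite_subcover (fun x : Ξ => ball x ε)
    (fun x => isOpen_ball) (fun x _ => Set.mem_iUnion.2 ⟨x, mem_ball_self hε⟩)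
  have hle : μ Set.univ ≤ ∑ x ∈ t, μ (ball x ε) :=
    le_trans (measure_mono ht) (measure_biUnion_finset_le t _)
  rw [measure_univ] at hle
  have : ∑ x ∈ t, μ (ball x ε) = 0 := by
    apply Finset.sum_eq_zero
    intro x _
    rw [hind x ξ ε]; exact h0
  rw [this] at hle
  exact (by norm_num : ¬ ((1:ℝ≥0∞) ≤ 0)) hle

private theorem sepCard_mul_le (μ : Measure Ξ) [IsProbabilityMeasure μ]
    (hind : ∀ ξ ξ' : Ξ, ∀ ε : ℝ, μ (ball ξ ε) = μ (ball ξ' ε))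
    (ξ : Ξ) {ε : ℝ} (hε : 0 < ε) :
    (1 : ℝ≥0∞) ≤ (sepCard Ξ ε) * μ (ball ξ ε) ∧
    (sepCard Ξ ε) * μ (ball ξ (ε/2)) ≤ 1 ∧ 1 ≤ sepCard Ξ ε := by
  classical
  set N := {n : ℕ | ∃ S : Finset Ξ, S.card = n ∧ ∀ x ∈ S, ∀ y ∈ S, x ≠ y → ε ≤ dist x y} with hN
  have hφpos : 0 < μ (ball ξ (ε/2)) := ball_pos μ hind ξ (by linarith)
  have hkey : ∀ S : Finset Ξ, (∀ x ∈ S, ∀ y ∈ S, x ≠ y → ε ≤ dist x y) →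
      (S.card : ℝ≥0∞) * μ (ball ξ (ε/2)) ≤ 1 := by
    intro S hS
    have hdisj : (S : Set Ξ).Pairwise (Function.onFun Disjoint fun x => ball x (ε/2)) := by
      intro x hx y hy hxy
      exact ball_disjoint_ball (by linarith [hS x hx y hy hxy])
    have hsum : μ (⋃ x ∈ S, ball x (ε/2)) = ∑ x ∈ S, μ (ball x (ε/2)) :=
      measure_biUnion_finset hdisj (fun x _ => measurableSet_ball)
    have : ∑ x ∈ S, μ (ball x (ε/2)) = (S.card : ℝ≥0∞) * μ (ball ξ (ε/2)) := by
      rw [Finset.sum_congr rfl (fun x _ => hind x ξ (ε/2))]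
      simp [Finset.sum_const, nsmul_eq_mul]
    rw [← this, ← hsum]
    exact le_trans (measure_mono (Set.subset_univ _)) (le_of_eq measure_univ)
  have hbdd : BddAbove N := by
    refine ⟨⌈1 / (μ (ball ξ (ε/2))).toReal⌉₊, ?_⟩
    rintro n ⟨S, rfl, hS⟩
    have h1 := hkey S hS
    have hfin : μ (ball ξ (ε/2)) ≠ ⊤ := measure_ne_top μ _
    have hr : (0:ℝ) < (μ (ball ξ (ε/2))).toReal := ENNReal.toReal_pos hφpos.ne' hfin
    have h2 : (S.card : ℝ) * (μ (ball ξ (ε/2))).toReal ≤ 1 := by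
      have := ENNReal.toReal_mono (by norm_num) h1
      rw [ENNReal.toReal_mul] at this
      simpa using this
    have h3 : (S.card : ℝ) ≤ 1 / (μ (ball ξ (ε/2))).toReal := by
      rw [le_div_iff₀ hr]; exact h2
    exact_mod_cast h3.trans (Nat.le_ceil _)
  have hone : 1 ∈ N := by
    refine ⟨{ξ}, by simp, ?_⟩
    intro x hx y hy hxy
    simp only [Finset.mem_singleton] at hx hy
    exact absurd (hx.trans hy.symm) hxy
  have hmem : sepCard Ξ ε ∈ N := Nat.sSup_mem ⟨1, hone⟩ hbdd
  obtain ⟨S, hScard, hSsep⟩ := hmem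
  have hone_le : 1 ≤ sepCard Ξ ε := le_csSup hbdd hone
  have hcov : ∀ z : Ξ, ∃ x ∈ S, dist z x < ε := by
    intro z
    by_contra h
    push_neg at h
    have hz : z ∉ S := by
      intro hz
      have := h z hz
      simp at this
      linarith
    have : S.card + 1 ∈ N := by
      refine ⟨insert z S, by rw [Finset.card_insert_of_notMem hz], ?_⟩
      intro x hx y hy hxy
      rcases Finset.mem_insert.mp hx with rfl | hxS
      · rcases Finset.mem_insert.mp hy with rfl | hyS
        · exact absurd rfl hxy
        · exact h y hyS
      · rcases Finset.mem_insert.mp hy with rfl | hyS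
        · rw [dist_comm]; exact h x hxS
        · exact hSsep x hxS y hyS hxy
    have h2 := le_csSup hbdd this
    have hEq : sSup N = sepCard Ξ ε := rfl
    rw [hScard, hEq] at h2
    omega
  have hcover : (1 : ℝ≥0∞) ≤ (sepCard Ξ ε) * μ (ball ξ ε) := by
    have hsub : (Set.univ : Set Ξ) ⊆ ⋃ x ∈ S, ball x ε := by
      intro z _
      obtain ⟨x, hx, hd⟩ := hcov z
      exact Set.mem_biUnion hx (mem_ball.mpr hd)
    calc (1 : ℝ≥0∞) = μ Set.univ := measure_univ.symm
      _ ≤ μ (⋃ x ∈ S, ball x ε) := measure_mono hsub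
      _ ≤ ∑ x ∈ S, μ (ball x ε) := measure_biUnion_finset_le S _
      _ = (S.card : ℝ≥0∞) * μ (ball ξ ε) := by
          rw [Finset.sum_congr rfl (fun x _ => hind x ξ ε)]
          simp [Finset.sum_const, nsmul_eq_mul]
      _ = (sepCard Ξ ε : ℝ≥0∞) * μ (ball ξ ε) := by rw [hScard]
  refine ⟨hcover, ?_, hone_le⟩
  have := hkey S hSsep
  rwa [hScard] at this

end Aux

private theorem map_double : Filter.map (fun ε : ℝ => 2*ε) (nhdsWithin 0 (Set.Ioi 0)) =
    nhdsWithin 0 (Set.Ioi 0) := by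
  have h2 : Tendsto (fun ε : ℝ => 2*ε) (nhdsWithin 0 (Set.Ioi 0)) (nhdsWithin 0 (Set.Ioi 0)) := by
    apply tendsto_nhdsWithin_of_tendsto_nhds_of_eventually_within
    · have : Tendsto (fun ε : ℝ => 2*ε) (nhds 0) (nhds 0) := by
        simpa using (tendsto_id (α := ℝ) (x := nhds 0)).const_mul 2
      exact this.mono_left nhdsWithin_le_nhds
    · filter_upwards [self_mem_nhdsWithin] with ε (hε : ε ∈ Set.Ioi 0)
      exact Set.mem_Ioi.2 (by simp at hε ⊢; linarith)
  have hh : Tendsto (fun ε : ℝ => ε/2) (nhdsWithin 0 (Set.Ioi 0)) (nhdsWithin 0 (Set.Ioi 0)) := by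
    apply tendsto_nhdsWithin_of_tendsto_nhds_of_eventually_within
    · have : Tendsto (fun ε : ℝ => ε/2) (nhds 0) (nhds 0) := by
        simpa using (tendsto_id (α := ℝ) (x := nhds 0)).div_const 2
      exact this.mono_left nhdsWithin_le_nhds
    · filter_upwards [self_mem_nhdsWithin] with ε (hε : ε ∈ Set.Ioi 0)
      exact Set.mem_Ioi.2 (by simp at hε ⊢; linarith)
  refine le_antisymm h2 ?_
  have heq : nhdsWithin (0:ℝ) (Set.Ioi 0) =
      Filter.map (fun ε : ℝ => 2*ε) (Filter.map (fun ε : ℝ => ε/2) (nhdsWithin 0 (Set.Ioi 0))) := by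
    rw [Filter.map_map]
    have : ((fun ε : ℝ => 2*ε) ∘ fun ε : ℝ => ε/2) = id := by
      funext x; simp [Function.comp]; ring
    rw [this, Filter.map_id]
  exact le_trans (le_of_eq heq) (Filter.map_mono hh)

private theorem compare_limsup_liminf {f b r : ℝ → ℝ}
    (hfb : ∀ᶠ ε in nhdsWithin (0:ℝ) (Set.Ioi 0), f ε ≤ b ε)
    (hbf : ∀ᶠ ε in nhdsWithin (0:ℝ) (Set.Ioi 0), b (2*ε) * r ε ≤ f ε)
    (hf0 : ∀ᶠ ε in nhdsWithin (0:ℝ) (Set.Ioi 0), 0 ≤ f ε)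
    (hb0 : ∀ᶠ ε in nhdsWithin (0:ℝ) (Set.Ioi 0), 0 ≤ b ε)
    (hr : Tendsto r (nhdsWithin (0:ℝ) (Set.Ioi 0)) (nhds 1)) :
    Filter.limsup f (nhdsWithin 0 (Set.Ioi 0)) = Filter.limsup b (nhdsWithin 0 (Set.Ioi 0)) ∧
    Filter.liminf f (nhdsWithin 0 (Set.Ioi 0)) = Filter.liminf b (nhdsWithin 0 (Set.Ioi 0)) := by
  set l := nhdsWithin (0:ℝ) (Set.Ioi 0) with hl
  have hmap : Filter.map (fun ε : ℝ => 2*ε) l = l := map_double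
  have evdouble : ∀ {P : ℝ → Prop}, (∀ᶠ ε in l, P ε) → (∀ᶠ ε in l, P (2*ε)) := by
    intro P h
    rw [← hmap] at h
    exact eventually_map.mp h
  have freqdouble : ∀ {P : ℝ → Prop}, (∃ᶠ ε in l, P ε) → (∃ᶠ ε in l, P (2*ε)) := by
    intro P h
    rw [← hmap] at h
    exact frequently_map.mp h
  have hrhalf : ∀ᶠ ε in l, (1:ℝ)/2 < r ε := hr.eventually_const_lt (by norm_num)
  have hcobf : IsCoboundedUnder (· ≤ ·) l f := isCoboundedUnder_le_of_eventually_le l hf0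
  have hcobb : IsCoboundedUnder (· ≤ ·) l b := isCoboundedUnder_le_of_eventually_le l hb0
  have hbdgef : IsBoundedUnder (· ≥ ·) l f := isBoundedUnder_of_eventually_ge hf0
  have hbdgeb : IsBoundedUnder (· ≥ ·) l b := isBoundedUnder_of_eventually_ge hb0
  constructor
  · by_cases hB : IsBoundedUnder (· ≤ ·) l b
    · obtain ⟨B, hBev⟩ := hB
      rw [eventually_map] at hBev
      have hfbd : IsBoundedUnder (· ≤ ·) l f :=
        isBoundedUnder_of_eventually_le ((hfb.and hBev).mono fun ε h => h.1.trans h.2)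
      have hBb : IsBoundedUnder (· ≤ ·) l b := isBoundedUnder_of_eventually_le hBev
      have h1 : limsup f l ≤ limsup b l := limsup_le_limsup hfb hcobf hBb
      have h2 : limsup b l ≤ limsup f l := by
        by_contra hlt
        push_neg at hlt
        obtain ⟨c, hc1, hc2⟩ := exists_between hlt
        have hf_nonneg : 0 ≤ limsup f l :=
          le_limsup_of_frequently_le hf0.frequently hfbd
        have hcpos : 0 < c := lt_of_le_of_lt hf_nonneg hc1
        set t : ℝ := (limsup f l / c + 1)/2 with ht
        have htlt1 : t < 1 := by
          have : limsup f l / c < 1 := (div_lt_one hcpos).2 hc1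
          rw [ht]; linarith
        have htfc : limsup f l < t * c := by
          have h3 : limsup f l / c < t := by
            have : limsup f l / c < 1 := (div_lt_one hcpos).2 hc1
            rw [ht]; linarith
          calc limsup f l = (limsup f l / c) * c := by field_simp
            _ < t * c := by exact mul_lt_mul_of_pos_right h3 hcpos
        have hrgt : ∀ᶠ ε in l, t < r ε := hr.eventually_const_lt htlt1
        have hfreq : ∃ᶠ ε in l, c < b (2*ε) :=
          freqdouble (frequently_lt_of_lt_limsup hcobb hc2)
        have hfreq2 : ∃ᶠ ε in l, t * c ≤ f ε := by
          refine (hfreq.and_eventually (hrgt.and hbf)).mono ?_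
          rintro ε ⟨h1', h2', h3'⟩
          have hrpos : 0 < r ε := lt_trans (by positivity) h2'
          have : t * c < f ε :=
            calc t * c ≤ r ε * c := mul_le_mul_of_nonneg_right h2'.le hcpos.le
              _ < r ε * b (2*ε) := mul_lt_mul_of_pos_left h1' hrpos
              _ = b (2*ε) * r ε := mul_comm _ _
              _ ≤ f ε := h3'
          exact this.le
        have := le_limsup_of_frequently_le hfreq2 hfbd
        linarith [lt_of_le_of_lt this htfc]
      linarith
    · have hfB : ¬ IsBoundedUnder (· ≤ ·) l f := by
        intro ⟨a, ha⟩
        rw [eventually_map] at ha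
        apply hB
        refine isBoundedUnder_of_eventually_le (a := 2 * max a 0) ?_
        have hev : ∀ᶠ ε in l, b (2*ε) ≤ 2 * max a 0 := by
          filter_upwards [evdouble hb0, hrhalf, hbf, ha] with ε h0 hhalf hle hfa
          have h1 : b (2*ε) * (1/2) ≤ b (2*ε) * r ε :=
            mul_le_mul_of_nonneg_left hhalf.le h0
          have : b (2*ε) * (1/2) ≤ max a 0 :=
            le_trans h1 (le_trans hle (hfa.trans (le_max_left _ _)))
          linarith
        rw [← hmap, eventually_map]
        exact hev
      have e1 : {a : ℝ | ∀ᶠ ε in l, f ε ≤ a} = ∅ := by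
        ext a; simp only [Set.mem_setOf_eq, Set.mem_empty_iff_false, iff_false]
        exact fun h => hfB (isBoundedUnder_of_eventually_le h)
      have e2 : {a : ℝ | ∀ᶠ ε in l, b ε ≤ a} = ∅ := by
        ext a; simp only [Set.mem_setOf_eq, Set.mem_empty_iff_false, iff_false]
        exact fun h => hB (isBoundedUnder_of_eventually_le h)
      rw [limsup_eq, limsup_eq, e1, e2]
  · by_cases hT : Tendsto b l atTop
    · have hfT : Tendsto f l atTop := by
        rw [Filter.tendsto_atTop]
        intro c
        have hev : ∀ᶠ ε in l, max (2*c) 0 ≤ b (2*ε) := evdouble (hT.eventually_ge_atTop _)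
        filter_upwards [hev, hrhalf, hbf] with ε h1 h2 h3
        have h0 : (0:ℝ) ≤ b (2*ε) := le_trans (le_max_right _ _) h1
        have : b (2*ε) * (1/2) ≤ b (2*ε) * r ε := mul_le_mul_of_nonneg_left h2.le h0
        have h4 : max (2*c) 0 * (1/2) ≤ f ε := by
          calc max (2*c) 0 * (1/2) ≤ b (2*ε) * (1/2) := by
                apply mul_le_mul_of_nonneg_right h1; norm_num
            _ ≤ b (2*ε) * r ε := this
            _ ≤ f ε := h3
        calc c ≤ max (2*c) 0 * (1/2) := by
              rcases le_max_iff.mpr (Or.inl (le_refl (2*c))) with h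
              have := le_max_right (2*c) (0:ℝ)
              nlinarith [le_max_left (2*c) (0:ℝ)]
          _ ≤ f ε := h4
      have e1 : {a : ℝ | ∀ᶠ ε in l, a ≤ f ε} = Set.univ := by
        ext a; simp only [Set.mem_setOf_eq, Set.mem_univ, iff_true]
        exact hfT.eventually_ge_atTop a
      have e2 : {a : ℝ | ∀ᶠ ε in l, a ≤ b ε} = Set.univ := by
        ext a; simp only [Set.mem_setOf_eq, Set.mem_univ, iff_true]
        exact hT.eventually_ge_atTop a
      rw [liminf_eq, liminf_eq, e1, e2]
    · obtain ⟨c0, hc0⟩ : ∃ c0, ∃ᶠ ε in l, b ε < c0 := by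
        rw [Filter.tendsto_atTop] at hT
        push_neg at hT
        obtain ⟨c0, hc0⟩ := hT
        exact ⟨c0, by simpa [not_le] using (not_eventually.mp hc0)⟩
      have hcobgb : IsCoboundedUnder (· ≥ ·) l b :=
        IsCoboundedUnder.of_frequently_le (hc0.mono fun ε h => h.le)
      have hcobgf : IsCoboundedUnder (· ≥ ·) l f := by
        apply IsCoboundedUnder.of_frequently_le (a := c0)
        exact (hc0.and_eventually hfb).mono fun ε h => (h.2.trans h.1.le)
      have h1 : liminf f l ≤ liminf b l := liminf_le_liminf hfb hbdgef hcobgb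
      have h2 : liminf b l ≤ liminf f l := by
        by_contra hlt
        push_neg at hlt
        obtain ⟨c, hc1, hc2⟩ := exists_between hlt
        have hf_nonneg : 0 ≤ liminf f l := le_liminf_of_le hcobgf hf0
        have hcpos : 0 < c := lt_of_le_of_lt hf_nonneg hc1
        set t : ℝ := (liminf f l / c + 1)/2 with ht
        have htlt1 : t < 1 := by
          have : liminf f l / c < 1 := (div_lt_one hcpos).2 hc1
          rw [ht]; linarith
        have htfc : liminf f l < t * c := by
          have h3 : liminf f l / c < t := by
            have : liminf f l / c < 1 := (div_lt_one hcpos).2 hc1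
            rw [ht]; linarith
          calc liminf f l = (liminf f l / c) * c := by field_simp
            _ < t * c := mul_lt_mul_of_pos_right h3 hcpos
        have hrgt : ∀ᶠ ε in l, t < r ε := hr.eventually_const_lt htlt1
        have hev : ∀ᶠ ε in l, c < b (2*ε) :=
          evdouble (eventually_lt_of_lt_liminf hc2 hbdgeb)
        have hev2 : ∀ᶠ ε in l, t * c ≤ f ε := by
          filter_upwards [hev, hrgt, hbf] with ε h1' h2' h3'
          have hrpos : 0 < r ε := lt_trans (by positivity) h2'
          have : t * c < f ε :=
            calc t * c ≤ r ε * c := mul_le_mul_of_nonneg_right h2'.le hcpos.le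
              _ < r ε * b (2*ε) := mul_lt_mul_of_pos_left h1' hrpos
              _ = b (2*ε) * r ε := mul_comm _ _
              _ ≤ f ε := h3'
          exact this.le
        have := le_liminf_of_le hcobgf hev2
        linarith
      linarith

private theorem r_tendsto : Tendsto (fun ε : ℝ => Real.log (2*ε) / Real.log ε)
    (nhdsWithin 0 (Set.Ioi 0)) (nhds 1) := by
  have hlog : Tendsto Real.log (nhdsWithin (0:ℝ) (Set.Ioi 0)) atBot :=
    Real.tendsto_log_nhdsGT_zero
  have hneg : Tendsto (fun ε : ℝ => -Real.log ε) (nhdsWithin 0 (Set.Ioi 0)) atTop :=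
    tendsto_neg_atBot_atTop.comp hlog
  have hinv0 : Tendsto (fun ε : ℝ => (-Real.log ε)⁻¹) (nhdsWithin 0 (Set.Ioi 0)) (nhds 0) :=
    tendsto_inv_atTop_zero.comp hneg
  have hinv : Tendsto (fun ε : ℝ => (Real.log ε)⁻¹) (nhdsWithin 0 (Set.Ioi 0)) (nhds 0) := by
    have h := hinv0.neg
    rw [neg_zero] at h
    refine h.congr fun ε => ?_
    rw [inv_neg, neg_neg]
  have h1 : Tendsto (fun ε : ℝ => Real.log 2 * (Real.log ε)⁻¹ + 1)
      (nhdsWithin 0 (Set.Ioi 0)) (nhds 1) := by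
    have := (hinv.const_mul (Real.log 2)).add (tendsto_const_nhds (x := (1:ℝ)))
    simpa using this
  refine h1.congr' ?_
  filter_upwards [Ioo_mem_nhdsGT_of_mem (Set.mem_Ico.2 ⟨le_refl (0:ℝ), one_half_pos⟩)]
    with ε hε
  obtain ⟨h0, h12⟩ := hε
  have hlogε : Real.log ε ≠ 0 := ne_of_lt (Real.log_neg h0 (by linarith))
  rw [Real.log_mul (by norm_num) h0.ne']
  field_simp

theorem ball_measure_scaling_eq_box_dimension {Ξ : Type*} [MetricSpace Ξ]
    [CompactSpace Ξ] [Nonempty Ξ] [MeasurableSpace Ξ] [BorelSpace Ξ]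
    (g : Ξ → Ξ) (hiso : Isometry g)
    (hmin : ∀ ξ : Ξ, Dense (Set.range fun n : ℕ => g^[n] ξ))
    (μ : Measure Ξ) [IsProbabilityMeasure μ] (hinv : MeasurePreserving g μ μ)
    (huniq : ∀ ν : Measure Ξ, IsProbabilityMeasure ν → MeasurePreserving g ν ν → ν = μ) :
    (∀ ξ ξ' : Ξ, ∀ ε : ℝ, μ (Metric.ball ξ ε) = μ (Metric.ball ξ' ε)) ∧
    (∀ ξ : Ξ,
      Filter.limsup (fun ε : ℝ => Real.log (μ (Metric.ball ξ ε)).toReal / Real.log ε)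
          (nhdsWithin 0 (Set.Ioi 0)) =
        Filter.limsup (fun ε : ℝ => boxQuot Ξ ε) (nhdsWithin 0 (Set.Ioi 0))) ∧
    (∀ ξ : Ξ,
      Filter.liminf (fun ε : ℝ => Real.log (μ (Metric.ball ξ ε)).toReal / Real.log ε)
          (nhdsWithin 0 (Set.Ioi 0)) =
        Filter.liminf (fun ε : ℝ => boxQuot Ξ ε) (nhdsWithin 0 (Set.Ioi 0))) := by
  have hind := ball_indep g hiso hmin μ hinv
  have main : ∀ ξ : Ξ,
      Filter.limsup (fun ε : ℝ => Real.log (μ (Metric.ball ξ ε)).toReal / Real.log ε)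
          (nhdsWithin 0 (Set.Ioi 0)) =
        Filter.limsup (fun ε : ℝ => boxQuot Ξ ε) (nhdsWithin 0 (Set.Ioi 0)) ∧
      Filter.liminf (fun ε : ℝ => Real.log (μ (Metric.ball ξ ε)).toReal / Real.log ε)
          (nhdsWithin 0 (Set.Ioi 0)) =
        Filter.liminf (fun ε : ℝ => boxQuot Ξ ε) (nhdsWithin 0 (Set.Ioi 0)) := by
    intro ξ
    set f : ℝ → ℝ := fun ε => Real.log (μ (Metric.ball ξ ε)).toReal / Real.log ε with hfdef
    have hev : ∀ᶠ ε in nhdsWithin (0:ℝ) (Set.Ioi 0), ε ∈ Set.Ioo (0:ℝ) (1/2) :=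
      Ioo_mem_nhdsGT_of_mem (Set.mem_Ico.2 ⟨le_refl (0:ℝ), one_half_pos⟩)
    -- the pointwise facts
    have facts : ∀ ε : ℝ, ε ∈ Set.Ioo (0:ℝ) (1/2) →
        (0 ≤ f ε ∧ f ε ≤ boxQuot Ξ ε ∧ 0 ≤ boxQuot Ξ ε ∧
          boxQuot Ξ (2*ε) * (Real.log (2*ε) / Real.log ε) ≤ f ε) := by
      intro ε hε
      obtain ⟨hε0, hε12⟩ := hε
      set p : ℝ := (μ (Metric.ball ξ ε)).toReal with hpdef
      have hp_pos : 0 < p :=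
        ENNReal.toReal_pos (ball_pos μ hind ξ hε0).ne' (measure_ne_top μ _)
      have hp_le1 : p ≤ 1 := by
        have := ENNReal.toReal_mono (by norm_num : (1:ℝ≥0∞) ≠ ⊤) (prob_le_one (μ := μ) (s := Metric.ball ξ ε))
        simpa using this
      obtain ⟨A1, -, A3⟩ := sepCard_mul_le μ hind ξ hε0
      obtain ⟨-, B2, B3⟩ := sepCard_mul_le μ hind ξ (by linarith : (0:ℝ) < 2*ε)
      rw [show (2*ε)/2 = ε by ring] at B2
      set m : ℝ := (sepCard Ξ ε : ℝ) with hm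
      set m2 : ℝ := (sepCard Ξ (2*ε) : ℝ) with hm2
      have hm1 : (1:ℝ) ≤ m := by rw [hm]; exact_mod_cast A3
      have hm21 : (1:ℝ) ≤ m2 := by rw [hm2]; exact_mod_cast B3
      have h1R : 1 ≤ m * p := by
        have hne : (sepCard Ξ ε : ℝ≥0∞) * μ (Metric.ball ξ ε) ≠ ⊤ :=
          ENNReal.mul_ne_top (ENNReal.natCast_ne_top _) (measure_ne_top μ _)
        have := ENNReal.toReal_mono hne A1
        rw [ENNReal.toReal_mul] at this
        simpa using this
      have h2R : m2 * p ≤ 1 := by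
        have := ENNReal.toReal_mono (by norm_num : (1:ℝ≥0∞) ≠ ⊤) B2
        rw [ENNReal.toReal_mul] at this
        simpa using this
      have hlogε : Real.log ε < 0 := Real.log_neg hε0 (by linarith)
      have hlog2ε : Real.log (2*ε) < 0 := Real.log_neg (by linarith) (by linarith)
      have hmpos : (0:ℝ) < m := by linarith
      have hm2pos : (0:ℝ) < m2 := by linarith
      -- numerator inequalities
      have num1 : -Real.log p ≤ Real.log m := by
        have hle : 1/m ≤ p := by
          rw [div_le_iff₀ hmpos]
          linarith [h1R, mul_comm m p]
        have := Real.log_le_log (by positivity) hle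
        rw [one_div, Real.log_inv] at this
        linarith
      have num2 : Real.log m2 ≤ -Real.log p := by
        have hle : p ≤ 1/m2 := by
          rw [le_div_iff₀ hm2pos]
          linarith [mul_comm m2 p]
        have := Real.log_le_log hp_pos hle
        rw [one_div, Real.log_inv] at this
        linarith
      have hlogp_nonpos : Real.log p ≤ 0 := Real.log_nonpos hp_pos.le hp_le1
      have hfeq : f ε = (-Real.log p) / (-Real.log ε) := by
        rw [hfdef]
        simp only [← hpdef]
        rw [neg_div_neg_eq]
      constructor
      · rw [hfeq]
        apply div_nonneg (by linarith) (by linarith)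
      refine ⟨?_, ?_, ?_⟩
      · rw [hfeq]
        unfold boxQuot
        rw [← hm]
        exact div_le_div_of_nonneg_right num1 (by linarith)
      · unfold boxQuot
        rw [← hm]
        apply div_nonneg (Real.log_nonneg hm1) (by linarith)
      · rw [hfeq]
        unfold boxQuot
        rw [← hm2]
        have hne1 : Real.log ε ≠ 0 := ne_of_lt hlogε
        have hne2 : Real.log (2*ε) ≠ 0 := ne_of_lt hlog2ε
        have heq : Real.log m2 / (-Real.log (2*ε)) * (Real.log (2*ε) / Real.log ε)
            = Real.log m2 / (-Real.log ε) := by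
          field_simp
        rw [heq]
        exact div_le_div_of_nonneg_right num2 (by linarith)
    have hfb : ∀ᶠ ε in nhdsWithin (0:ℝ) (Set.Ioi 0), f ε ≤ boxQuot Ξ ε := by
      filter_upwards [hev] with ε h using (facts ε h).2.1
    have hf0 : ∀ᶠ ε in nhdsWithin (0:ℝ) (Set.Ioi 0), 0 ≤ f ε := by
      filter_upwards [hev] with ε h using (facts ε h).1
    have hb0 : ∀ᶠ ε in nhdsWithin (0:ℝ) (Set.Ioi 0), 0 ≤ boxQuot Ξ ε := by
      filter_upwards [hev] with ε h using (facts ε h).2.2.1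
    have hbf : ∀ᶠ ε in nhdsWithin (0:ℝ) (Set.Ioi 0),
        boxQuot Ξ (2*ε) * (Real.log (2*ε) / Real.log ε) ≤ f ε := by
      filter_upwards [hev] with ε h using (facts ε h).2.2.2
    exact compare_limsup_liminf hfb hbf hf0 hb0 r_tendsto
  exact ⟨hind, fun ξ => (main ξ).1, fun ξ => (main ξ).2⟩
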